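/- Left-to-right ordering of downward rewrites in ReC_∨ derivations: For every derivation of a clause D from a set of equations 𝒞 in the calculus ReC_∨, there exists a ReC_∨ derivation of D from 𝒞 such that, when every clause is additionally annotated with the position of the previous rewrite performed on it (conclusions of Sup, EqRes and EqFac annotated with the empty position ε), every Rw_↓ inference rewriting at position q in a clause with position annotation p satisfies the left-to-right constraint q ≮_l p, while the Rw_↑ inferences are unconstrained. -/

import Mathlib

namespace RewInd

/-- First-order terms over variables `V` and function symbols `F`. -/
inductive Trm (V F : Type) : Type
  | var : V → Trm V F
  | app : F → List (Trm V F) → Trm V F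

variable {V F : Type}

/-- A substitution maps variables to terms. -/
abbrev Subst (V F : Type) := V → Trm V F

namespace Trm

/-- Apply a substitution homomorphically to a term. -/
def subst (θ : Subst V F) : Trm V F → Trm V F
  | var v => θ v
  | app f ts => app f (ts.attach.map fun t => subst θ t.1)
  decreasing_by
    have := List.sizeOf_lt_of_mem t.2
    simp only [Trm.app.sizeOf_spec]
    omega

/-- A term is ground if it contains no variables. -/
inductive Ground : Trm V F → Prop
  | app {f : F} {ts : List (Trm V F)} : (∀ t ∈ ts, Ground t) → Ground (app f ts)

/-- Whether a term is a variable. -/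
def isVar : Trm V F → Prop
  | var _ => True
  | app _ _ => False

/-- The multiset of variable occurrences of a term. -/
def varsM : Trm V F → Multiset V
  | var v => {v}
  | app _ ts => (ts.attach.map fun t => varsM t.1).sum
  decreasing_by
    have := List.sizeOf_lt_of_mem t.2
    simp only [Trm.app.sizeOf_spec]
    omega

end Trm

/-- Composition of substitutions: apply `θ` first, then `η`. -/
def Subst.comp (θ η : Subst V F) : Subst V F := fun v => (θ v).subst η

/-- The substitution replacing only the variable `x` by the term `t`. -/
def Subst.single [DecidableEq V] (x : V) (t : Trm V F) : Subst V F :=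
  fun v => if v = x then t else Trm.var v

/-- Positions: finite sequences of argument indices addressing subterm occurrences. -/
abbrev Pos := List ℕ

/-- `PosLeft p q` (`p <ₗ q`): position `p` is to the left of position `q`. -/
def PosLeft (p q : Pos) : Prop :=
  ∃ (r : Pos) (i j : ℕ) (p' q' : Pos), i < j ∧ p = r ++ i :: p' ∧ q = r ++ j :: q'

namespace Trm

/-- `SubtermAt t p s`: the term `t` has the subterm `s` at position `p`. -/
inductive SubtermAt : Trm V F → Pos → Trm V F → Prop
  | here (t : Trm V F) : SubtermAt t [] t
  | app {f : F} {ts : List (Trm V F)} {i : ℕ} {t s : Trm V F} {p : Pos} :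
      ts[i]? = some t → SubtermAt t p s → SubtermAt (app f ts) (i :: p) s

/-- `s` is a subterm of `t` (`s ⊴ t`). -/
def Subterm (s t : Trm V F) : Prop := ∃ p, SubtermAt t p s

/-- `s` is a strict subterm of `t` (`s ◁ t`). -/
def StrictSubterm (s t : Trm V F) : Prop := ∃ p, p ≠ [] ∧ SubtermAt t p s

/-- `ReplP a b p s t`: the term `s` has an occurrence of `a` at position `p`, and `t` is
the result of replacing this occurrence by `b`. -/
inductive ReplP (a b : Trm V F) : Pos → Trm V F → Trm V F → Prop
  | here : ReplP a b [] a b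
  | app {f : F} {ts : List (Trm V F)} {i : ℕ} {t t' : Trm V F} {p : Pos} :
      ts[i]? = some t → ReplP a b p t t' →
      ReplP a b (i :: p) (app f ts) (app f (ts.set i t'))

/-- `t` is obtained from `s` by replacing one occurrence of `a` by `b`. -/
def Repl (a b s t : Trm V F) : Prop := ∃ p, ReplP a b p s t

end Trm

/-- Literals: equations `s ≃ t` and disequations `s ≄ t`. -/
inductive Lit (V F : Type) : Type
  | pos : Trm V F → Trm V F → Lit V F
  | neg : Trm V F → Trm V F → Lit V F

namespace Lit

def subst (θ : Subst V F) : Lit V F → Lit V F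
  | pos s t => pos (s.subst θ) (t.subst θ)
  | neg s t => neg (s.subst θ) (t.subst θ)

/-- The complement of a literal. -/
def compl : Lit V F → Lit V F
  | pos s t => neg s t
  | neg s t => pos s t

def Ground : Lit V F → Prop
  | pos s t => s.Ground ∧ t.Ground
  | neg s t => s.Ground ∧ t.Ground

def varsM : Lit V F → Multiset V
  | pos s t => s.varsM + t.varsM
  | neg s t => s.varsM + t.varsM

/-- The literal with polarity `b` (`true` = equation, `false` = disequation) and sides `s`, `t`. -/
def sided (b : Bool) (s t : Trm V F) : Lit V F := if b then pos s t else neg s t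

/-- `L` is the literal `s ⋈ t` of polarity `b`, where (dis)equations are symmetric in their
two sides. -/
def HasShape (L : Lit V F) (b : Bool) (s t : Trm V F) : Prop :=
  L = sided b s t ∨ L = sided b t s

/-- Replacement of one occurrence of `a` by `b` at a position inside a literal:
position `0` addresses the left-hand side, position `1` the right-hand side. -/
inductive ReplP (a b : Trm V F) : Pos → Lit V F → Lit V F → Prop
  | posL {s s' t : Trm V F} {p : Pos} :
      Trm.ReplP a b p s s' → ReplP a b (0 :: p) (pos s t) (pos s' t)
  | posR {s t t' : Trm V F} {p : Pos} :
      Trm.ReplP a b p t t' → ReplP a b (1 :: p) (pos s t) (pos s t')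
  | negL {s s' t : Trm V F} {p : Pos} :
      Trm.ReplP a b p s s' → ReplP a b (0 :: p) (neg s t) (neg s' t)
  | negR {s t t' : Trm V F} {p : Pos} :
      Trm.ReplP a b p t t' → ReplP a b (1 :: p) (neg s t) (neg s t')

def Repl (a b : Trm V F) (L L' : Lit V F) : Prop := ∃ p, ReplP a b p L L'

/-- `SubtermAt L p u`: the literal `L` has the subterm `u` at position `p`. -/
inductive SubtermAt : Lit V F → Pos → Trm V F → Prop
  | posL {s t u : Trm V F} {p : Pos} : Trm.SubtermAt s p u → SubtermAt (pos s t) (0 :: p) u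
  | posR {s t u : Trm V F} {p : Pos} : Trm.SubtermAt t p u → SubtermAt (pos s t) (1 :: p) u
  | negL {s t u : Trm V F} {p : Pos} : Trm.SubtermAt s p u → SubtermAt (neg s t) (0 :: p) u
  | negR {s t u : Trm V F} {p : Pos} : Trm.SubtermAt t p u → SubtermAt (neg s t) (1 :: p) u

end Lit

/-- Clauses are finite multisets of literals. -/
abbrev Clause (V F : Type) := Multiset (Lit V F)

namespace Clause

def subst (θ : Subst V F) (C : Clause V F) : Clause V F := C.map (Lit.subst θ)

def Ground (C : Clause V F) : Prop := ∀ L ∈ C, L.Ground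

def varsM (C : Clause V F) : Multiset V := (C.map Lit.varsM).sum

/-- `ReplP a b q C D`: the clause `D` is obtained from `C` by replacing one occurrence
of `a` at clause position `q` by `b` (the head of `q` addresses a literal of the clause). -/
def ReplP (a b : Trm V F) (q : Pos) (C D : Clause V F) : Prop :=
  ∃ (ls : List (Lit V F)) (i : ℕ) (L L' : Lit V F) (p : Pos),
    q = i :: p ∧ C = (ls : Multiset (Lit V F)) ∧ ls[i]? = some L ∧
    Lit.ReplP a b p L L' ∧ D = ((ls.set i L' : List (Lit V F)) : Multiset (Lit V F))

/-- `D` is obtained from `C` by replacing one occurrence of `a` by `b`. -/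
def Repl (a b : Trm V F) (C D : Clause V F) : Prop := ∃ q, ReplP a b q C D

end Clause

/-- The unit clause `l ≃ r`. -/
def eqn (l r : Trm V F) : Clause V F := {Lit.pos l r}

/-- `E` is the equation `l ≃ r`; equations are symmetric in their sides. -/
def IsEqnOf (E : Clause V F) (l r : Trm V F) : Prop := E = eqn l r ∨ E = eqn r l

/-- `E` is a (unit) equation. -/
def IsEqn (E : Clause V F) : Prop := ∃ l r, E = eqn l r

/-- The (Dershowitz–Manna) multiset extension of an ordering: `N` is greater than `M`. -/
def MulExt {α : Type*} (r : α → α → Prop) (N M : Multiset α) : Prop :=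
  ∃ X Y Z, N = Z + Y ∧ M = Z + X ∧ Y ≠ 0 ∧ ∀ x ∈ X, ∃ y ∈ Y, r y x

/-- Encoding of a literal as a multiset of terms, for the ordering extension. -/
def Lit.ms : Lit V F → Multiset (Trm V F)
  | .pos s t => {s, t}
  | .neg s t => {s, s, t, t}

/-- Extension of the term ordering to literals. -/
def LitGT (succ : Trm V F → Trm V F → Prop) (L M : Lit V F) : Prop := MulExt succ L.ms M.ms

/-- Extension of the term ordering to clauses. -/
def ClauseGT (succ : Trm V F → Trm V F → Prop) (C D : Clause V F) : Prop :=
  MulExt (LitGT succ) C D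

/-- `a ⪰ b`. -/
def SuccEq (succ : Trm V F → Trm V F → Prop) (a b : Trm V F) : Prop := succ a b ∨ a = b

/-- `succ` is a simplification ordering (total on ground terms). -/
structure SimpOrd (succ : Trm V F → Trm V F → Prop) : Prop where
  trans : ∀ {a b c : Trm V F}, succ a b → succ b c → succ a c
  irrefl : ∀ a : Trm V F, ¬ succ a a
  wf : WellFounded fun a b : Trm V F => succ b a
  total_ground : ∀ {s t : Trm V F}, s.Ground → t.Ground → succ s t ∨ s = t ∨ succ t s
  subst_mono : ∀ {l r : Trm V F} (θ : Subst V F), succ l r → succ (l.subst θ) (r.subst θ)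
  ctx_mono : ∀ {l r s s' : Trm V F} {p : Pos}, succ l r → Trm.ReplP l r p s s' → succ s s'

/-- `θ` is a unifier of `s` and `t`. -/
def IsUnifier (θ : Subst V F) (s t : Trm V F) : Prop := s.subst θ = t.subst θ

/-- `θ` is a most general unifier of `s` and `t`. -/
def IsMGU (θ : Subst V F) (s t : Trm V F) : Prop :=
  IsUnifier θ s t ∧ ∀ η, IsUnifier η s t → ∃ μ, ∀ v, η v = (θ v).subst μ

/-- The superposition calculus `Sup` (rules Sup, EqRes, EqFac). -/
inductive SupInf (succ : Trm V F → Trm V F → Prop) : List (Clause V F) → Clause V F → Prop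
  | sup {C D C' D' : Clause V F} {L M : Lit V F} {b : Bool} {s t u l r s' : Trm V F}
      {p : Pos} {θ : Subst V F} :
      C = L ::ₘ C' → L.HasShape b s t →
      D = M ::ₘ D' → M.HasShape true l r →
      ¬ u.isVar → Trm.ReplP u r p s s' → IsMGU θ l u →
      ¬ SuccEq succ (r.subst θ) (l.subst θ) → ¬ SuccEq succ (t.subst θ) (s.subst θ) →
      SupInf succ [C, D] (Clause.subst θ (Lit.sided b s' t ::ₘ (C' + D')))
  | eqres {C C' : Clause V F} {L : Lit V F} {s t : Trm V F} {θ : Subst V F} :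
      C = L ::ₘ C' → L.HasShape false s t → IsMGU θ s t →
      SupInf succ [C] (Clause.subst θ C')
  | eqfac {C C' : Clause V F} {L M : Lit V F} {s t u w : Trm V F} {θ : Subst V F} :
      C = L ::ₘ M ::ₘ C' → L.HasShape true s t → M.HasShape true u w → IsMGU θ s u →
      ¬ SuccEq succ (t.subst θ) (s.subst θ) → ¬ SuccEq succ (w.subst θ) (t.subst θ) →
      SupInf succ [C] (Clause.subst θ (Lit.sided true s t ::ₘ Lit.sided false t w ::ₘ C'))

/-- The unconstrained rewriting rule (Rw): from `C[lθ]` and `l ≃ r` derive `C[lθ ↦ rθ]`. -/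
def RwInf : List (Clause V F) → Clause V F → Prop := fun Ps D =>
  ∃ (C E : Clause V F) (l r : Trm V F) (θ : Subst V F),
    Ps = [C, E] ∧ IsEqnOf E l r ∧ Clause.Repl (l.subst θ) (r.subst θ) C D

/-- Derivability of a clause from a set of clauses in an inference system given as a
relation between lists of premises and conclusions. -/
inductive Derives {α : Type*} (I : List α → α → Prop) (S : Set α) : α → Prop
  | ax {C} : C ∈ S → Derives I S C
  | inf {Ps C} : (∀ P ∈ Ps, Derives I S P) → I Ps C → Derives I S C

/-- An inference system admits equational derivability (ED). -/
def AdmitsED (I : List (Clause V F) → Clause V F → Prop) : Prop :=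
  ∀ S : Set (Clause V F), (∀ C ∈ S, IsEqn C) →
    ∀ (l r : Trm V F) (θ : Subst V F) (D D' : Clause V F),
      Derives I S D → Clause.Repl (l.subst θ) (r.subst θ) D D' →
      Derives I (S ∪ {eqn l r}) D'

/-- Clause annotations `↓` and `↑`. -/
inductive Ann : Type
  | down
  | up

/-- Annotate every clause of a set with `↓`. -/
def annDown (S : Set (Clause V F)) : Set (Clause V F × Ann) :=
  {P | P.1 ∈ S ∧ P.2 = Ann.down}

/-- Lift an inference system to annotated clauses: all premises and the conclusion
are annotated `↓`. -/
def LiftDown (I : List (Clause V F) → Clause V F → Prop) :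
    List (Clause V F × Ann) → (Clause V F × Ann) → Prop := fun Ps C =>
  I (Ps.map Prod.fst) C.1 ∧ (∀ P ∈ Ps, P.2 = Ann.down) ∧ C.2 = Ann.down

/-- The rule Rw_↓: from `↓`-annotated `C[lθ]` and `↓`-annotated `l ≃ r` with `lθ ⋠ rθ`,
derive `↓`-annotated `C[lθ ↦ rθ]`. -/
def RwDownInf (succ : Trm V F → Trm V F → Prop) :
    List (Clause V F × Ann) → (Clause V F × Ann) → Prop := fun Ps D =>
  ∃ (C E : Clause V F) (l r : Trm V F) (θ : Subst V F),
    Ps = [(C, Ann.down), (E, Ann.down)] ∧ IsEqnOf E l r ∧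
    ¬ SuccEq succ (r.subst θ) (l.subst θ) ∧
    Clause.Repl (l.subst θ) (r.subst θ) C D.1 ∧ D.2 = Ann.down

/-- The rule Rw_↑: from `C[lθ]` with either annotation and `↓`-annotated `l ≃ r` with
`lθ ⋡ rθ`, derive `↑`-annotated `C[lθ ↦ rθ]`. -/
def RwUpInf (succ : Trm V F → Trm V F → Prop) :
    List (Clause V F × Ann) → (Clause V F × Ann) → Prop := fun Ps D =>
  ∃ (C E : Clause V F) (a : Ann) (l r : Trm V F) (θ : Subst V F),
    Ps = [(C, a), (E, Ann.down)] ∧ IsEqnOf E l r ∧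
    ¬ SuccEq succ (l.subst θ) (r.subst θ) ∧
    Clause.Repl (l.subst θ) (r.subst θ) C D.1 ∧ D.2 = Ann.up

/-- The calculus ReC_∨ = Sup ∪ {Rw_↓, Rw_↑}. -/
def ReCvee (succ : Trm V F → Trm V F → Prop) :
    List (Clause V F × Ann) → (Clause V F × Ann) → Prop := fun Ps C =>
  LiftDown (SupInf succ) Ps C ∨ RwDownInf succ Ps C ∨ RwUpInf succ Ps C

/-- Annotate every clause of a set with `↓` and the empty position `ε`. -/
def annDownEps (S : Set (Clause V F)) : Set (Clause V F × Ann × Pos) :=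
  {P | P.1 ∈ S ∧ P.2.1 = Ann.down ∧ P.2.2 = ([] : Pos)}

/-- Lift an inference system to (annotation, position)-annotated clauses: premises are
`↓`-annotated, and the conclusion is annotated `↓` with the empty position `ε`. -/
def LiftDownEps (I : List (Clause V F) → Clause V F → Prop) :
    List (Clause V F × Ann × Pos) → (Clause V F × Ann × Pos) → Prop := fun Ps C =>
  I (Ps.map Prod.fst) C.1 ∧ (∀ P ∈ Ps, P.2.1 = Ann.down) ∧
    C.2.1 = Ann.down ∧ C.2.2 = ([] : Pos)

/-- The rule Rw→_↓. -/
def RwArrDownInf (succ : Trm V F → Trm V F → Prop) :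
    List (Clause V F × Ann × Pos) → (Clause V F × Ann × Pos) → Prop := fun Ps D =>
  ∃ (C E : Clause V F) (p pE : Pos) (l r : Trm V F) (θ : Subst V F) (q : Pos),
    Ps = [(C, Ann.down, p), (E, Ann.down, pE)] ∧ IsEqnOf E l r ∧
    ¬ SuccEq succ (r.subst θ) (l.subst θ) ∧ ¬ PosLeft q p ∧
    Clause.ReplP (l.subst θ) (r.subst θ) q C D.1 ∧ D.2.1 = Ann.down ∧ D.2.2 = q

/-- The rule Rw→_↑. -/
def RwArrUpInf (succ : Trm V F → Trm V F → Prop) :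
    List (Clause V F × Ann × Pos) → (Clause V F × Ann × Pos) → Prop := fun Ps D =>
  ∃ (C E : Clause V F) (a : Ann) (p pE : Pos) (l r : Trm V F) (θ : Subst V F) (q : Pos),
    Ps = [(C, a, p), (E, Ann.down, pE)] ∧ IsEqnOf E l r ∧
    ¬ SuccEq succ (l.subst θ) (r.subst θ) ∧ (a = Ann.down ∨ ¬ PosLeft q p) ∧
    Clause.ReplP (l.subst θ) (r.subst θ) q C D.1 ∧ D.2.1 = Ann.up ∧ D.2.2 = q

/-- The calculus ReC→_∨ = Sup ∪ {Rw→_↓, Rw→_↑}. -/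
def ReCarrVee (succ : Trm V F → Trm V F → Prop) :
    List (Clause V F × Ann × Pos) → (Clause V F × Ann × Pos) → Prop := fun Ps C =>
  LiftDownEps (SupInf succ) Ps C ∨ RwArrDownInf succ Ps C ∨ RwArrUpInf succ Ps C

/-- Rw_↑ lifted to position annotations without any left-to-right constraint. -/
def RwUpAnyPosInf (succ : Trm V F → Trm V F → Prop) :
    List (Clause V F × Ann × Pos) → (Clause V F × Ann × Pos) → Prop := fun Ps D =>
  ∃ (C E : Clause V F) (a : Ann) (p pE : Pos) (l r : Trm V F) (θ : Subst V F) (q : Pos),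
    Ps = [(C, a, p), (E, Ann.down, pE)] ∧ IsEqnOf E l r ∧
    ¬ SuccEq succ (l.subst θ) (r.subst θ) ∧
    Clause.ReplP (l.subst θ) (r.subst θ) q C D.1 ∧ D.2.1 = Ann.up ∧ D.2.2 = q

/-- The calculus ReC_∨ with position annotations, where the Rw_↓ inferences satisfy the
left-to-right constraint `q ≮ₗ p` and the Rw_↑ inferences are unconstrained. -/
def ReCveeLtr (succ : Trm V F → Trm V F → Prop) :
    List (Clause V F × Ann × Pos) → (Clause V F × Ann × Pos) → Prop := fun Ps C =>
  LiftDownEps (SupInf succ) Ps C ∨ RwArrDownInf succ Ps C ∨ RwUpAnyPosInf succ Ps C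

/-! ### Auxiliary development -/

section Aux

lemma posLeft_nil {q : Pos} : ¬ PosLeft q [] := by
  rintro ⟨r, i, j, p', q', hij, hp, hq⟩
  cases r <;> simp at hq

lemma posLeft_nil' {q : Pos} : ¬ PosLeft [] q := by
  rintro ⟨r, i, j, p', q', hij, hp, hq⟩
  cases r <;> simp at hp

lemma posLeft_cons_iff {a b : ℕ} {p q : Pos} :
    PosLeft (a :: p) (b :: q) ↔ a < b ∨ (a = b ∧ PosLeft p q) := by
  constructor
  · rintro ⟨r, i, j, p', q', hij, hp, hq⟩
    cases r with
    | nil =>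
      simp at hp hq
      exact Or.inl (hp.1 ▸ hq.1 ▸ hij)
    | cons c r' =>
      simp at hp hq
      exact Or.inr ⟨hp.1.trans hq.1.symm, r', i, j, p', q', hij, hp.2, hq.2⟩
  · rintro (h | ⟨rfl, r, i, j, p', q', hij, hp, hq⟩)
    · exact ⟨[], a, b, p, q, h, rfl, rfl⟩
    · exact ⟨a :: r, i, j, p', q', hij, by simp [hp], by simp [hq]⟩

lemma posLeft_asymm : ∀ {p q : Pos}, PosLeft p q → PosLeft q p → False := by
  intro p
  induction p with
  | nil => intro q h1 _; exact posLeft_nil' h1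
  | cons a p ih =>
    intro q h1 h2
    cases q with
    | nil => exact posLeft_nil h1
    | cons b q =>
      rcases posLeft_cons_iff.mp h1 with h | ⟨rfl, h⟩
      · rcases posLeft_cons_iff.mp h2 with h' | ⟨h', _⟩ <;> omega
      · rcases posLeft_cons_iff.mp h2 with h' | ⟨_, h'⟩
        · omega
        · exact ih h h'

lemma posLeft_irrefl {p : Pos} : ¬ PosLeft p p := fun h => posLeft_asymm h h

lemma getElem?_set_self_of {α : Type*} {l : List α} {i : ℕ} {t a : α} (h : l[i]? = some t) :
    (l.set i a)[i]? = some a := by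
  rw [List.getElem?_set_self', h]; rfl

/-- Commutation of term replacements at left-parallel positions. -/
lemma trm_comm : ∀ (r : Pos) {i j : ℕ} {q' p' : Pos} {a b c d s s' s'' : Trm V F},
    i < j → Trm.ReplP a b (r ++ j :: p') s s' → Trm.ReplP c d (r ++ i :: q') s' s'' →
    ∃ m, Trm.ReplP c d (r ++ i :: q') s m ∧ Trm.ReplP a b (r ++ j :: p') m s'' := by
  intro r
  induction r with
  | nil =>
    intro i j q' p' a b c d s s' s'' hij h1 h2
    simp only [List.nil_append] at *
    cases h1 with
    | app hget1 hrep1 =>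
      rename_i f ts tj tj'
      cases h2 with
      | app hget2 hrep2 =>
        rename_i ti ti'
        rw [List.getElem?_set_ne (by omega : j ≠ i)] at hget2
        refine ⟨Trm.app f (ts.set i ti'), Trm.ReplP.app hget2 hrep2, ?_⟩
        rw [List.set_comm _ _ (by omega : j ≠ i)]
        exact Trm.ReplP.app (by rw [List.getElem?_set_ne (by omega : i ≠ j)]; exact hget1) hrep1
  | cons k r ih =>
    intro i j q' p' a b c d s s' s'' hij h1 h2
    simp only [List.cons_append] at *
    cases h1 with
    | app hget1 hrep1 =>
      rename_i f ts tk tk'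
      cases h2 with
      | app hget2 hrep2 =>
        rename_i u u'
        rw [getElem?_set_self_of hget1] at hget2
        cases hget2
        obtain ⟨m, hm1, hm2⟩ := ih hij hrep1 hrep2
        rw [List.set_set]
        refine ⟨Trm.app f (ts.set k m), Trm.ReplP.app hget1 hm1, ?_⟩
        have : ts.set k u' = (ts.set k m).set k u' := by rw [List.set_set]
        rw [this]
        exact Trm.ReplP.app (getElem?_set_self_of hget1) hm2

/-- Commutation of literal replacements at left-parallel positions. -/
lemma lit_comm {a b c d : Trm V F} {pl ql : Pos} {L L' L'' : Lit V F}
    (h1 : Lit.ReplP a b pl L L') (h2 : Lit.ReplP c d ql L' L'')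
    (hlt : PosLeft ql pl) :
    ∃ M, Lit.ReplP c d ql L M ∧ Lit.ReplP a b pl M L'' := by
  cases h1 with
  | @posL s s' t pt h1' =>
    cases h2 with
    | @posL _ s'' _ qt h2' =>
      rcases posLeft_cons_iff.mp hlt with h | ⟨_, h⟩
      · omega
      · obtain ⟨r, i, j, q0, p0, hij, hq, hp⟩ := h
        subst hq; subst hp
        obtain ⟨m, hm1, hm2⟩ := trm_comm r hij h1' h2'
        exact ⟨Lit.pos m t, Lit.ReplP.posL hm1, Lit.ReplP.posL hm2⟩
    | @posR _ _ t'' qt h2' =>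
      rcases posLeft_cons_iff.mp hlt with h | ⟨h, _⟩ <;> omega
  | @posR s t t' pt h1' =>
    cases h2 with
    | @posL _ s'' _ qt h2' =>
      exact ⟨Lit.pos s'' t, Lit.ReplP.posL h2', Lit.ReplP.posR h1'⟩
    | @posR _ _ t'' qt h2' =>
      rcases posLeft_cons_iff.mp hlt with h | ⟨_, h⟩
      · omega
      · obtain ⟨r, i, j, q0, p0, hij, hq, hp⟩ := h
        subst hq; subst hp
        obtain ⟨m, hm1, hm2⟩ := trm_comm r hij h1' h2'
        exact ⟨Lit.pos s m, Lit.ReplP.posR hm1, Lit.ReplP.posR hm2⟩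
  | @negL s s' t pt h1' =>
    cases h2 with
    | @negL _ s'' _ qt h2' =>
      rcases posLeft_cons_iff.mp hlt with h | ⟨_, h⟩
      · omega
      · obtain ⟨r, i, j, q0, p0, hij, hq, hp⟩ := h
        subst hq; subst hp
        obtain ⟨m, hm1, hm2⟩ := trm_comm r hij h1' h2'
        exact ⟨Lit.neg m t, Lit.ReplP.negL hm1, Lit.ReplP.negL hm2⟩
    | @negR _ _ t'' qt h2' =>
      rcases posLeft_cons_iff.mp hlt with h | ⟨h, _⟩ <;> omega
  | @negR s t t' pt h1' =>
    cases h2 with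
    | @negL _ s'' _ qt h2' =>
      exact ⟨Lit.neg s'' t, Lit.ReplP.negL h2', Lit.ReplP.negR h1'⟩
    | @negR _ _ t'' qt h2' =>
      rcases posLeft_cons_iff.mp hlt with h | ⟨_, h⟩
      · omega
      · obtain ⟨r, i, j, q0, p0, hij, hq, hp⟩ := h
        subst hq; subst hp
        obtain ⟨m, hm1, hm2⟩ := trm_comm r hij h1' h2'
        exact ⟨Lit.neg s m, Lit.ReplP.negR hm1, Lit.ReplP.negR hm2⟩

lemma list_decomp {α : Type*} :
    ∀ (ls : List α) (i : ℕ) (L L' : α), ls[i]? = some L →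
    (↑ls : Multiset α) = L ::ₘ ↑(ls.eraseIdx i) ∧
      (↑(ls.set i L') : Multiset α) = L' ::ₘ ↑(ls.eraseIdx i) := by
  intro ls
  induction ls with
  | nil => intro i L L' h; simp at h
  | cons hd tl ih =>
    intro i L L' h
    cases i with
    | zero =>
      simp at h
      subst h
      simp [List.eraseIdx]
    | succ n =>
      simp only [List.getElem?_cons_succ] at h
      obtain ⟨h1, h2⟩ := ih n L L' h
      constructor
      · show ((hd :: tl : List α) : Multiset α) = _
        rw [← Multiset.cons_coe, h1, List.eraseIdx_cons_succ, ← Multiset.cons_coe,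
          Multiset.cons_swap]
      · show ((hd :: tl.set n L' : List α) : Multiset α) = _
        rw [← Multiset.cons_coe, h2, List.eraseIdx_cons_succ, ← Multiset.cons_coe,
          Multiset.cons_swap]

/-- Destruct a clause replacement into a multiset decomposition. -/
lemma clause_replP_destruct {a b : Trm V F} {q : Pos} {C D : Clause V F}
    (h : Clause.ReplP a b q C D) :
    ∃ (pl : Pos) (L L' : Lit V F) (R : Clause V F),
      C = L ::ₘ R ∧ D = L' ::ₘ R ∧ Lit.ReplP a b pl L L' := by
  obtain ⟨ls, i, L, L', pl, hq, hC, hget, hlit, hD⟩ := h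
  obtain ⟨h1, h2⟩ := list_decomp ls i L L' hget
  exact ⟨pl, L, L', ↑(ls.eraseIdx i), by rw [hC, h1], by rw [hD, h2], hlit⟩

/-- Build a clause replacement with list index `0` from a multiset decomposition. -/
lemma clause_replP_cons {a b : Trm V F} {pl : Pos} {L L' : Lit V F} {R : Clause V F}
    (h : Lit.ReplP a b pl L L') :
    Clause.ReplP a b (0 :: pl) (L ::ₘ R) (L' ::ₘ R) := by
  refine ⟨L :: R.toList, 0, L, L', pl, rfl, ?_, by simp, h, ?_⟩
  · rw [← Multiset.cons_coe, Multiset.coe_toList]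
  · show L' ::ₘ R = ((L' :: R.toList : List (Lit V F)) : Multiset (Lit V F))
    rw [← Multiset.cons_coe, Multiset.coe_toList]

variable (succ : Trm V F → Trm V F → Prop) (𝒞 : Set (Clause V F))

/-- Normalized downward derivations: every rewrite annotation has head `0`, and every
rewrite position is left-compatible with the annotation of its major premise. -/
inductive GD : Clause V F → Pos → Prop
  | ax {C} : C ∈ 𝒞 → GD C []
  | sup {Cs : List (Clause V F)} {D : Clause V F} (f : ℕ → Pos) :
      (∀ k (hk : k < Cs.length), GD Cs[k] (f k)) → SupInf succ Cs D → GD D []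
  | rw {C E : Clause V F} {pE : Pos} {l r : Trm V F} {θ : Subst V F}
      {L L' : Lit V F} {R : Clause V F} {pl p : Pos} :
      GD C p → GD E pE → IsEqnOf E l r →
      ¬ SuccEq succ (r.subst θ) (l.subst θ) →
      C = L ::ₘ R → Lit.ReplP (l.subst θ) (r.subst θ) pl L L' →
      (p = [] ∨ ∃ t, p = 0 :: t ∧ ¬ PosLeft pl t) →
      GD (L' ::ₘ R) (0 :: pl)

variable {succ} {𝒞}

/-- Appending a downward rewrite to a normalized derivation, commuting it leftwards past
later rewrites when necessary. -/
lemma gd_append {C : Clause V F} {p : Pos} (h : GD succ 𝒞 C p) :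
    ∀ {E : Clause V F} {pE : Pos} {l r : Trm V F} {θ : Subst V F}
      {L L' : Lit V F} {R : Clause V F} {ql : Pos},
      GD succ 𝒞 E pE → IsEqnOf E l r →
      ¬ SuccEq succ (r.subst θ) (l.subst θ) →
      C = L ::ₘ R → Lit.ReplP (l.subst θ) (r.subst θ) ql L L' →
      ∃ t, GD succ 𝒞 (L' ::ₘ R) (0 :: t) ∧
        ∀ x, PosLeft x t → PosLeft x ql ∨ ∃ pl, p = 0 :: pl ∧ PosLeft x pl := by
  induction h with
  | @ax C hmem =>
    intro E pE l r θ L L' R ql hE hEq hord hC hrep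
    subst hC
    refine ⟨ql, GD.rw (GD.ax hmem) hE hEq hord rfl hrep (Or.inl rfl), fun x hx => Or.inl hx⟩
  | @sup Cs D f hprem hsup ih =>
    intro E pE l r θ L L' R ql hE hEq hord hC hrep
    subst hC
    refine ⟨ql, GD.rw (GD.sup f hprem hsup) hE hEq hord rfl hrep (Or.inl rfl),
      fun x hx => Or.inl hx⟩
  | @rw C0 E1 pE1 l1 r1 θ1 L1 L1' R1 pl1 p0 h0 hE1 hEq1 hord1 hC0 hrep1 hgood ih0 ihE1 =>
    intro E pE l r θ L L' R ql hE hEq hord hC hrep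
    by_cases hpl : PosLeft ql pl1
    · -- need to commute the new rewrite past the last rewrite
      rcases (Multiset.cons_eq_cons.mp hC) with ⟨hL, hR⟩ | ⟨hne, cs, hcs1, hcs2⟩
      · -- same literal occurrence: commute inside the literal
        subst hR
        obtain ⟨M, hM1, hM2⟩ := lit_comm hrep1 (hL ▸ hrep) hpl
        obtain ⟨t2, hGD2, hprop2⟩ := ih0 hE hEq hord hC0 hM1
        refine ⟨pl1, GD.rw hGD2 hE1 hEq1 hord1 rfl hM2 (Or.inr ⟨t2, rfl, ?_⟩),
          fun x hx => Or.inr ⟨pl1, rfl, hx⟩⟩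
        intro hcon
        rcases hprop2 pl1 hcon with h | ⟨pl0, hp0, hcon'⟩
        · exact posLeft_asymm hpl h
        · rcases hgood with h' | ⟨t0, ht0, hnl⟩
          · rw [h'] at hp0; cases hp0
          · rw [ht0] at hp0
            cases hp0
            exact hnl hcon'
      · -- different literal occurrences: commute at the multiset level
        have hC0' : C0 = L ::ₘ (L1 ::ₘ cs) := by
          rw [hC0, hcs1, Multiset.cons_swap]
        obtain ⟨t2, hGD2, hprop2⟩ := ih0 hE hEq hord hC0' hrep
        have hswap : L' ::ₘ L1 ::ₘ cs = L1 ::ₘ (L' ::ₘ cs) := Multiset.cons_swap _ _ _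
        have hgd : GD succ 𝒞 (L1' ::ₘ L' ::ₘ cs) (0 :: pl1) := by
          refine GD.rw hGD2 hE1 hEq1 hord1 hswap hrep1 (Or.inr ⟨t2, rfl, ?_⟩)
          intro hcon
          rcases hprop2 pl1 hcon with h | ⟨pl0, hp0, hcon'⟩
          · exact posLeft_asymm hpl h
          · rcases hgood with h' | ⟨t0, ht0, hnl⟩
            · rw [h'] at hp0; cases hp0
            · rw [ht0] at hp0
              cases hp0
              exact hnl hcon'
        rw [hcs2]
        rw [Multiset.cons_swap]
        exact ⟨pl1, hgd, fun x hx => Or.inr ⟨pl1, rfl, hx⟩⟩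
    · -- no conflict: perform the new rewrite directly
      have hgd0 : GD succ 𝒞 (L1' ::ₘ R1) (0 :: pl1) :=
        GD.rw h0 hE1 hEq1 hord1 hC0 hrep1 hgood
      exact ⟨ql, GD.rw hgd0 hE hEq hord hC hrep (Or.inr ⟨pl1, rfl, hpl⟩),
        fun x hx => Or.inl hx⟩

lemma choose_list {I : List (Clause V F × Ann × Pos) → (Clause V F × Ann × Pos) → Prop}
    {S : Set (Clause V F × Ann × Pos)} :
    ∀ (Cs : List (Clause V F)),
      (∀ C ∈ Cs, ∃ p, Derives I S (C, Ann.down, p)) →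
      ∃ Ps : List (Clause V F × Ann × Pos), Ps.map Prod.fst = Cs ∧
        ∀ P ∈ Ps, Derives I S P ∧ P.2.1 = Ann.down := by
  intro Cs
  induction Cs with
  | nil => exact fun _ => ⟨[], rfl, by simp⟩
  | cons C Cs ih =>
    intro h
    obtain ⟨p, hp⟩ := h C (by simp)
    obtain ⟨Ps, hPs1, hPs2⟩ := ih fun C' hC' => h C' (by simp [hC'])
    refine ⟨(C, Ann.down, p) :: Ps, by simp [hPs1], ?_⟩
    intro P hP
    rcases List.mem_cons.mp hP with rfl | hP
    · exact ⟨hp, rfl⟩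
    · exact hPs2 P hP

/-- Soundness of normalized derivations with respect to `ReCveeLtr`. -/
lemma gd_sound {C : Clause V F} {p : Pos} (h : GD succ 𝒞 C p) :
    Derives (ReCveeLtr succ) (annDownEps 𝒞) (C, Ann.down, p) := by
  induction h with
  | @ax C hmem => exact Derives.ax ⟨hmem, rfl, rfl⟩
  | @sup Cs D f hprem hsup ih =>
    have hall : ∀ C ∈ Cs, ∃ p, Derives (ReCveeLtr succ) (annDownEps 𝒞) (C, Ann.down, p) := by
      intro C hC
      obtain ⟨k, hk, rfl⟩ := List.mem_iff_getElem.mp hC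
      exact ⟨f k, ih k hk⟩
    obtain ⟨Ps, hPs1, hPs2⟩ := choose_list Cs hall
    refine Derives.inf (fun P hP => (hPs2 P hP).1) (Or.inl ?_)
    exact ⟨by rw [hPs1]; exact hsup, fun P hP => (hPs2 P hP).2, rfl, rfl⟩
  | @rw C0 E pE l r θ L L' R pl p h0 hE hEq hord hC0 hrep hgood ih0 ihE =>
    refine Derives.inf (Ps := [(C0, Ann.down, p), (E, Ann.down, pE)]) ?_ (Or.inr (Or.inl ?_))
    · intro P hP
      simp only [List.mem_cons, List.not_mem_nil, or_false] at hP
      rcases hP with rfl | rfl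
      · exact ih0
      · exact ihE
    · refine ⟨C0, E, p, pE, l, r, θ, 0 :: pl, rfl, hEq, hord, ?_, ?_, rfl, rfl⟩
      · rcases hgood with h' | ⟨t0, ht0, hnl⟩
        · subst h'; exact posLeft_nil
        · subst ht0
          intro hcon
          rcases posLeft_cons_iff.mp hcon with h | ⟨_, h⟩
          · omega
          · exact hnl h
      · rw [hC0]; exact clause_replP_cons hrep

/-- Main lemma: every `ReCvee` derivation from `annDown 𝒞` yields a normalized
derivation (for `↓`-clauses) or a `ReCveeLtr` derivation (for `↑`-clauses). -/
lemma main_lemma {P : Clause V F × Ann} (h : Derives (ReCvee succ) (annDown 𝒞) P) :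
    (∃ p, GD succ 𝒞 P.1 p ∧ P.2 = Ann.down) ∨
      (∃ q, Derives (ReCveeLtr succ) (annDownEps 𝒞) (P.1, Ann.up, q) ∧ P.2 = Ann.up) := by
  induction h with
  | @ax C hmem => exact Or.inl ⟨[], GD.ax hmem.1, hmem.2⟩
  | @inf Ps P hprem hI ih =>
    rcases hI with ⟨hsup, hdown, hPd⟩ | hI | hI
    · -- lifted Sup inference
      left
      have hall : ∀ C ∈ Ps.map Prod.fst, ∃ p, GD succ 𝒞 C p := by
        intro C hC
        obtain ⟨Q, hQ, rfl⟩ := List.mem_map.mp hC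
        rcases ih Q hQ with ⟨p, hp, _⟩ | ⟨q, _, hup⟩
        · exact ⟨p, hp⟩
        · rw [hdown Q hQ] at hup; exact (Ann.noConfusion hup)
      have hch : ∀ k : ℕ, ∃ p : Pos, ∀ hk : k < (Ps.map Prod.fst).length,
          GD succ 𝒞 (Ps.map Prod.fst)[k] p := by
        intro k
        by_cases hk : k < (Ps.map Prod.fst).length
        · obtain ⟨p, hp⟩ := hall (Ps.map Prod.fst)[k] (List.getElem_mem hk)
          exact ⟨p, fun _ => hp⟩
        · exact ⟨[], fun h => absurd h hk⟩
      choose f hf using hch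
      exact ⟨[], GD.sup f (fun k hk => hf k hk) hsup, hPd⟩
    · -- Rw_↓ inference
      left
      obtain ⟨C, E, l, r, θ, hPs, hEq, hord, hrepl, hPd⟩ := hI
      have hCmem : (C, Ann.down) ∈ Ps := by rw [hPs]; simp
      have hEmem : (E, Ann.down) ∈ Ps := by rw [hPs]; simp
      have hGDC : ∃ p, GD succ 𝒞 C p := by
        rcases ih _ hCmem with ⟨p, hp, _⟩ | ⟨q, _, hup⟩
        · exact ⟨p, hp⟩
        · exact (Ann.noConfusion hup)
      have hGDE : ∃ p, GD succ 𝒞 E p := by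
        rcases ih _ hEmem with ⟨p, hp, _⟩ | ⟨q, _, hup⟩
        · exact ⟨p, hp⟩
        · exact (Ann.noConfusion hup)
      obtain ⟨pc, hGDC⟩ := hGDC
      obtain ⟨pe, hGDE⟩ := hGDE
      obtain ⟨q, hq⟩ := hrepl
      obtain ⟨pl, L, L', R, hCeq, hDeq, hlit⟩ := clause_replP_destruct hq
      obtain ⟨t, hGDD, _⟩ := gd_append hGDC hGDE hEq hord hCeq hlit
      exact ⟨0 :: t, hDeq ▸ hGDD, hPd⟩
    · -- Rw_↑ inference
      right
      obtain ⟨C, E, a0, l, r, θ, hPs, hEq, hord, hrepl, hPu⟩ := hI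
      have hCmem : (C, a0) ∈ Ps := by rw [hPs]; simp
      have hEmem : (E, Ann.down) ∈ Ps := by rw [hPs]; simp
      have hDC : ∃ pc, Derives (ReCveeLtr succ) (annDownEps 𝒞) (C, a0, pc) := by
        rcases ih _ hCmem with ⟨p, hp, hd⟩ | ⟨q, hq, hu⟩
        · exact ⟨p, by rw [show a0 = Ann.down from hd]; exact gd_sound hp⟩
        · exact ⟨q, by rw [show a0 = Ann.up from hu]; exact hq⟩
      have hDE : ∃ pe, Derives (ReCveeLtr succ) (annDownEps 𝒞) (E, Ann.down, pe) := by
        rcases ih _ hEmem with ⟨p, hp, _⟩ | ⟨q, _, hu⟩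
        · exact ⟨p, gd_sound hp⟩
        · exact (Ann.noConfusion hu)
      obtain ⟨pc, hDC⟩ := hDC
      obtain ⟨pe, hDE⟩ := hDE
      obtain ⟨q, hq⟩ := hrepl
      refine ⟨q, Derives.inf (Ps := [(C, a0, pc), (E, Ann.down, pe)]) ?_ (Or.inr (Or.inr
        ⟨C, E, a0, pc, pe, l, r, θ, q, rfl, hEq, hord, hq, rfl, rfl⟩)), hPu⟩
      intro Q hQ
      simp only [List.mem_cons, List.not_mem_nil, or_false] at hQ
      rcases hQ with rfl | rfl
      · exact hDC
      · exact hDE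

end Aux

/-- **Left-to-right ordering of downward rewrites in ReC_∨ derivations.**
For every derivation of a clause `D` from a set of equations `𝒞` in ReC_∨, there is a
ReC_∨ derivation of `D` from `𝒞` in which, annotating every clause with the position of
the previous rewrite performed on it (conclusions of Sup, EqRes and EqFac annotated
`ε`), every Rw_↓ inference rewriting at position `q` in a clause with position
annotation `p` satisfies `q ≮ₗ p`, while the Rw_↑ inferences are unconstrained. -/
theorem left_to_right_downward_rewrites {V F : Type}
    (succ : Trm V F → Trm V F → Prop) (hsucc : SimpOrd succ)
    (𝒞 : Set (Clause V F)) (h𝒞 : ∀ C ∈ 𝒞, IsEqn C)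
    (D : Clause V F) (a : Ann)
    (hder : Derives (ReCvee succ) (annDown 𝒞) (D, a)) :
    ∃ (a' : Ann) (q : Pos),
      Derives (ReCveeLtr succ) (annDownEps 𝒞) (D, a', q) := by
  rcases main_lemma hder with ⟨p, hGD, _⟩ | ⟨q, hq, _⟩
  · exact ⟨Ann.down, p, gd_sound hGD⟩
  · exact ⟨Ann.up, q, hq⟩

end RewInd
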